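/- Let d ≥ 2, let a ∈ ℝ^d, and let c_{i,j} (i ≠ j) be real constants with c_{i,j} = c_{j,i} > 0 for all i ≠ j. Then the set of points ξ ∈ ℝ^d with pairwise distinct coordinates satisfying ξ_i = a_i + Σ_{j ≠ i} c_{i,j}/(ξ_i − ξ_j) for all i = 1,…,d has exactly d! elements. -/

import Mathlib

open Finset

namespace CMsol

lemma erase_sum_eq_ite {d : ℕ} (i : Fin d) (G : Fin d → ℝ) :
    ∑ j ∈ univ.erase i, G j = ∑ j, if j = i then 0 else G j := by
  rw [Finset.sum_congr rfl fun j hj => ((if_neg (Finset.ne_of_mem_erase hj)).symm :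
    G j = if j = i then 0 else G j)]
  exact Finset.sum_erase _ (if_pos rfl)

lemma double_sum_comm {d : ℕ} (F : Fin d → Fin d → ℝ) :
    ∑ i, ∑ j ∈ univ.erase i, F i j = ∑ i, ∑ j ∈ univ.erase i, F j i := by
  have h1 : ∑ i, ∑ j ∈ univ.erase i, F i j
      = ∑ i, ∑ j, if j = i then 0 else F i j := by
    exact Finset.sum_congr rfl fun i _ => erase_sum_eq_ite i _
  have h2 : ∑ i, ∑ j ∈ univ.erase i, F j i
      = ∑ i, ∑ j, if j = i then 0 else F j i := by
    exact Finset.sum_congr rfl fun i _ => erase_sum_eq_ite i _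
  rw [h1, h2, Finset.sum_comm]
  apply Finset.sum_congr rfl; intro i _
  apply Finset.sum_congr rfl; intro j _
  by_cases h : i = j <;> simp [h, eq_comm]

lemma uniq {d : ℕ} (a : Fin d → ℝ) (c : Fin d → Fin d → ℝ)
    (hsymm : ∀ i j, i ≠ j → c i j = c j i)
    (hpos : ∀ i j, i ≠ j → 0 < c i j)
    (ξ η : Fin d → ℝ) (hξ : StrictMono ξ) (hη : StrictMono η)
    (hξe : ∀ i, ξ i = a i + ∑ j ∈ univ.erase i, c i j / (ξ i - ξ j))
    (hηe : ∀ i, η i = a i + ∑ j ∈ univ.erase i, c i j / (η i - η j)) :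
    ξ = η := by
  -- difference formula
  have hdiff : ∀ i, ξ i - η i
      = ∑ j ∈ univ.erase i, c i j * ((ξ i - ξ j)⁻¹ - (η i - η j)⁻¹) := by
    intro i
    conv_lhs => rw [hξe i, hηe i]
    rw [add_sub_add_left_eq_sub, ← Finset.sum_sub_distrib]
    exact Finset.sum_congr rfl fun j _ => by rw [div_eq_mul_inv, div_eq_mul_inv, ← mul_sub]
  set u : Fin d → ℝ := fun i => ξ i - η i with hu
  have key : ∑ i, (u i)^2
      = ∑ i, ∑ j ∈ univ.erase i, c i j * (u i * ((ξ i - ξ j)⁻¹ - (η i - η j)⁻¹)) := by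
    apply Finset.sum_congr rfl; intro i _
    rw [sq]
    nth_rewrite 2 [show u i = ξ i - η i from rfl]
    rw [hdiff i, Finset.mul_sum]
    exact Finset.sum_congr rfl fun j _ => by ring
  have hswap : ∑ i, ∑ j ∈ univ.erase i, c i j * (u i * ((ξ i - ξ j)⁻¹ - (η i - η j)⁻¹))
      = ∑ i, ∑ j ∈ univ.erase i, c i j * (-(u j) * ((ξ i - ξ j)⁻¹ - (η i - η j)⁻¹)) := by
    rw [double_sum_comm (fun i j => c i j * (u i * ((ξ i - ξ j)⁻¹ - (η i - η j)⁻¹)))]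
    apply Finset.sum_congr rfl; intro i _
    apply Finset.sum_congr rfl; intro j hj
    have hji : j ≠ i := Finset.ne_of_mem_erase hj
    rw [hsymm j i hji]
    have e1 : (ξ j - ξ i)⁻¹ = -(ξ i - ξ j)⁻¹ := by
      rw [show ξ j - ξ i = -(ξ i - ξ j) by ring, inv_neg]
    have e2 : (η j - η i)⁻¹ = -(η i - η j)⁻¹ := by
      rw [show η j - η i = -(η i - η j) by ring, inv_neg]
    rw [e1, e2]; ring
  have hdouble : 2 * ∑ i, (u i)^2
      = ∑ i, ∑ j ∈ univ.erase i, c i j * ((u i - u j) * ((ξ i - ξ j)⁻¹ - (η i - η j)⁻¹)) := by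
    rw [two_mul, key]
    nth_rewrite 2 [hswap]
    rw [← Finset.sum_add_distrib]
    apply Finset.sum_congr rfl; intro i _
    rw [← Finset.sum_add_distrib]
    exact Finset.sum_congr rfl fun j _ => by ring
  have hterm : ∀ i, ∀ j ∈ univ.erase i,
      c i j * ((u i - u j) * ((ξ i - ξ j)⁻¹ - (η i - η j)⁻¹)) ≤ 0 := by
    intro i j hj
    have hji : j ≠ i := Finset.ne_of_mem_erase hj
    set s := ξ i - ξ j with hs
    set t := η i - η j with ht
    have hst : 0 < s * t := by
      rcases lt_or_gt_of_ne (Ne.symm hji) with h | h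
      · have := hξ h; have := hη h
        have hs0 : s < 0 := by simp [hs]; linarith
        have ht0 : t < 0 := by simp [ht]; linarith
        exact mul_pos_of_neg_of_neg hs0 ht0
      · have := hξ h; have := hη h
        have hs0 : 0 < s := by simp [hs]; linarith
        have ht0 : 0 < t := by simp [ht]; linarith
        exact mul_pos hs0 ht0
    have hsne : s ≠ 0 := fun h => by simp [h] at hst
    have htne : t ≠ 0 := fun h => by simp [h] at hst
    have huij : u i - u j = s - t := by simp [hu, hs, ht]; ring
    rw [huij, inv_sub_inv hsne htne]
    have : (s - t) * ((t - s) / (s * t)) = -((s - t)^2) / (s * t) := by ring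
    rw [this]
    have h1 : 0 ≤ c i j := le_of_lt (hpos i j (Ne.symm hji))
    have h2 : -((s - t)^2) / (s * t) ≤ 0 :=
      div_nonpos_of_nonpos_of_nonneg (by nlinarith [sq_nonneg (s - t)]) (le_of_lt hst)
    nlinarith [mul_nonneg h1 (neg_nonneg.mpr h2)]
  have hrhs : ∑ i, ∑ j ∈ univ.erase i, c i j * ((u i - u j) * ((ξ i - ξ j)⁻¹ - (η i - η j)⁻¹)) ≤ 0 :=
    Finset.sum_nonpos fun i _ => Finset.sum_nonpos fun j hj => hterm i j hj
  have hsq : ∑ i, (u i)^2 ≤ 0 := by linarith [hdouble, hrhs]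
  have hzero : ∀ i ∈ (univ : Finset (Fin d)), (u i)^2 = 0 := by
    rw [← Finset.sum_eq_zero_iff_of_nonneg fun i _ => sq_nonneg (u i)]
    exact le_antisymm hsq (Finset.sum_nonneg fun i _ => sq_nonneg (u i))
  funext i
  have := hzero i (mem_univ i)
  have : u i = 0 := by
    have := sq_eq_zero_iff.mp this
    exact this
  have : ξ i - η i = 0 := this
  linarith


lemma sort_unique {n : ℕ} (ξ : Fin n → ℝ) (hinj : Function.Injective ξ)
    (σ τ : Equiv.Perm (Fin n))
    (hσ : StrictMono (ξ ∘ σ)) (hτ : StrictMono (ξ ∘ τ)) : σ = τ := by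
  haveI : WellFoundedLT (Fin n) := inferInstance
  have hr : Set.range (ξ ∘ σ) = Set.range (ξ ∘ τ) := by
    rw [Set.range_comp, Set.range_comp, Equiv.range_eq_univ, Equiv.range_eq_univ]
  have h := (StrictMono.range_inj hσ hτ).mp hr
  apply Equiv.ext; intro i
  exact hinj (congrFun h i)

lemma relabel {d : ℕ} (a : Fin d → ℝ) (c : Fin d → Fin d → ℝ) (ξ : Fin d → ℝ)
    (σ : Equiv.Perm (Fin d)) :
    (∀ i, ξ i = a i + ∑ j ∈ univ.erase i, c i j / (ξ i - ξ j)) ↔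
    (∀ i, (ξ ∘ σ) i = a (σ i) +
      ∑ j ∈ univ.erase i, c (σ i) (σ j) / ((ξ ∘ σ) i - (ξ ∘ σ) j)) := by
  have hsum : ∀ i : Fin d, ∑ j ∈ univ.erase i, c (σ i) (σ j) / (ξ (σ i) - ξ (σ j))
      = ∑ j ∈ univ.erase (σ i), c (σ i) j / (ξ (σ i) - ξ j) := by
    intro i
    refine Finset.sum_equiv σ (fun j => ?_) (fun j hj => rfl)
    simp [Finset.mem_erase, σ.injective.ne_iff]
  constructor
  · intro h i
    have hh := h (σ i)
    simp only [Function.comp_apply]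
    conv_lhs => rw [hh]
    rw [hsum i]
  · intro h i
    have hh := h (σ.symm i)
    simp only [Function.comp_apply, Equiv.apply_symm_apply] at hh
    conv_lhs => rw [hh]
    have h2 := hsum (σ.symm i)
    simp only [Equiv.apply_symm_apply] at h2
    rw [h2]

lemma log_le_abs (t : ℝ) : Real.log t ≤ |t| := by
  rcases eq_or_ne t 0 with h | h
  · simp [h]
  · calc Real.log t = Real.log |t| := (Real.log_abs t).symm
      _ ≤ |t| - 1 := Real.log_le_sub_one_of_pos (abs_pos.mpr h)
      _ ≤ |t| := by linarith

noncomputable def F {d : ℕ} (a : Fin d → ℝ) (c : Fin d → Fin d → ℝ) (x : Fin d → ℝ) : ℝ :=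
  (∑ i, ((x i)^2/2 - a i * x i))
  - (1/2) * ∑ i, ∑ j ∈ univ.erase i, c i j * Real.log (x i - x j)

noncomputable def K {d : ℕ} (a : Fin d → ℝ) (c : Fin d → Fin d → ℝ) : ℝ :=
  (∑ i, |a i|) + (1/2) * (∑ i, ∑ j ∈ univ.erase i, c i j) + 1

lemma K_nonneg {d : ℕ} (a : Fin d → ℝ) (c : Fin d → Fin d → ℝ)
    (hpos : ∀ i j, i ≠ j → 0 < c i j) : 0 ≤ K a c := by
  have h1 : (0:ℝ) ≤ ∑ i, |a i| := Finset.sum_nonneg fun i _ => abs_nonneg _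
  have h2 : (0:ℝ) ≤ ∑ i, ∑ j ∈ univ.erase i, c i j :=
    Finset.sum_nonneg fun i _ => Finset.sum_nonneg fun j hj =>
      le_of_lt (hpos i j (Ne.symm (Finset.ne_of_mem_erase hj)))
  unfold K; linarith

lemma masterBound {d : ℕ} (a : Fin d → ℝ) (c : Fin d → Fin d → ℝ)
    (hpos : ∀ i j, i ≠ j → 0 < c i j) (x : Fin d → ℝ) (k l : Fin d) (hkl : k ≠ l) :
    (∑ i, ((x i)^2/2 - K a c * |x i|))
      + (1/2) * (c k l * max 0 (-Real.log (x k - x l))) ≤ F a c x := by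
  set N := ∑ i, |x i| with hN
  have hNn : 0 ≤ N := Finset.sum_nonneg fun i _ => abs_nonneg _
  set C0 := ∑ i, ∑ j ∈ univ.erase i, c i j with hC0
  -- termwise bound for log terms
  have hterm : ∀ i : Fin d, ∀ j ∈ univ.erase i,
      -(c i j * (|x i| + |x j|)) + c i j * max 0 (-Real.log (x i - x j))
        ≤ -(c i j * Real.log (x i - x j)) := by
    intro i j hj
    have hji : i ≠ j := Ne.symm (Finset.ne_of_mem_erase hj)
    have hc : 0 ≤ c i j := le_of_lt (hpos i j hji)
    have hlog : Real.log (x i - x j) ≤ |x i| + |x j| := by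
      calc Real.log (x i - x j) ≤ |x i - x j| := log_le_abs _
        _ = |x i + -(x j)| := by ring_nf
        _ ≤ |x i| + |-(x j)| := abs_add_le _ _
        _ = |x i| + |x j| := by rw [abs_neg]
    rcases le_or_gt 0 (Real.log (x i - x j)) with h | h
    · rw [max_eq_left (by linarith)]
      have := mul_le_mul_of_nonneg_left hlog hc
      linarith
    · rw [max_eq_right (by linarith)]
      have := mul_nonneg hc (by positivity : (0:ℝ) ≤ |x i| + |x j|)
      linarith
  -- sum of the |x i| + |x j| weights
  have habs : ∀ i : Fin d, ∀ j ∈ univ.erase i, c i j * (|x i| + |x j|) ≤ c i j * N := by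
    intro i j hj
    have hji : i ≠ j := Ne.symm (Finset.ne_of_mem_erase hj)
    have hc : 0 ≤ c i j := le_of_lt (hpos i j hji)
    have hsub : |x i| + |x j| ≤ N := by
      have hpair : ({i, j} : Finset (Fin d)).sum (fun m => |x m|) = |x i| + |x j| :=
        Finset.sum_pair hji
      rw [← hpair, hN]
      exact Finset.sum_le_sum_of_subset_of_nonneg (Finset.subset_univ _)
        (fun m _ _ => abs_nonneg _)
    exact mul_le_mul_of_nonneg_left hsub hc
  have hsum1 : ∑ i, ∑ j ∈ univ.erase i, c i j * (|x i| + |x j|) ≤ C0 * N := by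
    rw [hC0, Finset.sum_mul]
    apply Finset.sum_le_sum; intro i _
    rw [Finset.sum_mul]
    exact Finset.sum_le_sum (habs i)
  -- the single max-term bound
  have hsingle : c k l * max 0 (-Real.log (x k - x l))
      ≤ ∑ i, ∑ j ∈ univ.erase i, c i j * max 0 (-Real.log (x i - x j)) := by
    have hnn : ∀ i : Fin d, ∀ j ∈ univ.erase i,
        0 ≤ c i j * max 0 (-Real.log (x i - x j)) := fun i j hj =>
      mul_nonneg (le_of_lt (hpos i j (Ne.symm (Finset.ne_of_mem_erase hj)))) (le_max_left _ _)
    have h1 : c k l * max 0 (-Real.log (x k - x l))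
        ≤ ∑ j ∈ univ.erase k, c k j * max 0 (-Real.log (x k - x j)) :=
      Finset.single_le_sum (fun j hj => hnn k j hj)
        (Finset.mem_erase.mpr ⟨Ne.symm hkl, Finset.mem_univ l⟩)
    refine h1.trans (Finset.single_le_sum (fun i _ => Finset.sum_nonneg (hnn i)) (Finset.mem_univ k))
  -- linear part
  have hlin : (1/2) * C0 * N ≤ ∑ i, (K a c * |x i| - a i * x i) := by
    have : ∀ i : Fin d, (1/2) * C0 * |x i| ≤ K a c * |x i| - a i * x i := by
      intro i
      have h1 : a i * x i ≤ |a i| * |x i| := by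
        calc a i * x i ≤ |a i * x i| := le_abs_self _
          _ = |a i| * |x i| := abs_mul _ _
      have h2 : |a i| ≤ ∑ m, |a m| := Finset.single_le_sum
        (fun m _ => abs_nonneg (a m)) (Finset.mem_univ i)
      have h3 : |a i| * |x i| ≤ (∑ m, |a m|) * |x i| :=
        mul_le_mul_of_nonneg_right h2 (abs_nonneg _)
      have hK : K a c = (∑ m, |a m|) + (1/2) * C0 + 1 := rfl
      nlinarith [abs_nonneg (x i)]
    calc (1/2) * C0 * N = ∑ i, (1/2) * C0 * |x i| := by rw [hN, Finset.mul_sum]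
      _ ≤ ∑ i, (K a c * |x i| - a i * x i) := Finset.sum_le_sum fun i _ => this i
  -- assemble
  have hlogsum : -(1/2) * (C0 * N) + (1/2) * (c k l * max 0 (-Real.log (x k - x l)))
      ≤ -(1/2) * ∑ i, ∑ j ∈ univ.erase i, c i j * Real.log (x i - x j) := by
    have hA : ∑ i, ∑ j ∈ univ.erase i,
        (-(c i j * (|x i| + |x j|)) + c i j * max 0 (-Real.log (x i - x j)))
        ≤ ∑ i, ∑ j ∈ univ.erase i, -(c i j * Real.log (x i - x j)) :=
      Finset.sum_le_sum fun i _ => Finset.sum_le_sum (hterm i)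
    have hsplit : ∑ i, ∑ j ∈ univ.erase i,
        (-(c i j * (|x i| + |x j|)) + c i j * max 0 (-Real.log (x i - x j)))
        = -(∑ i, ∑ j ∈ univ.erase i, c i j * (|x i| + |x j|))
          + ∑ i, ∑ j ∈ univ.erase i, c i j * max 0 (-Real.log (x i - x j)) := by
      rw [← Finset.sum_neg_distrib, ← Finset.sum_add_distrib]
      apply Finset.sum_congr rfl; intro i _
      rw [← Finset.sum_neg_distrib, ← Finset.sum_add_distrib]
    have hB : ∑ i, ∑ j ∈ univ.erase i, -(c i j * Real.log (x i - x j))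
        = -∑ i, ∑ j ∈ univ.erase i, c i j * Real.log (x i - x j) := by
      rw [← Finset.sum_neg_distrib]
      apply Finset.sum_congr rfl; intro i _
      rw [← Finset.sum_neg_distrib]
    rw [hB] at hA
    rw [hsplit] at hA
    nlinarith [hsum1, hsingle]
  unfold F
  have expand : ∑ i, ((x i)^2/2 - a i * x i)
      = ∑ i, ((x i)^2/2 - K a c * |x i|) + ∑ i, (K a c * |x i| - a i * x i) := by
    rw [← Finset.sum_add_distrib]
    apply Finset.sum_congr rfl; intro i _; ring
  rw [expand]
  nlinarith [hlin, hlogsum]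

lemma hasDerivAt_F {d : ℕ} (a : Fin d → ℝ) (c : Fin d → Fin d → ℝ)
    (hsymm : ∀ i j, i ≠ j → c i j = c j i)
    (z : Fin d → ℝ) (hz : ∀ i j : Fin d, i ≠ j → z i ≠ z j) (i : Fin d) :
    HasDerivAt (fun t => F a c (Function.update z i t))
      (z i - a i - ∑ j ∈ univ.erase i, c i j * (z i - z j)⁻¹) (z i) := by
  have hrw : (fun t => F a c (Function.update z i t))
      = fun t => (∑ k, ((if k = i then t else z k)^2/2 - a k * (if k = i then t else z k)))
        - (1/2) * ∑ k, ∑ j ∈ univ.erase k,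
            c k j * Real.log ((if k = i then t else z k) - (if j = i then t else z j)) := by
    funext t
    unfold F
    simp only [Function.update_apply]
  rw [hrw]
  have h1 : HasDerivAt (fun t => ∑ k, ((if k = i then t else z k)^2/2
      - a k * (if k = i then t else z k)))
      (∑ k, (if k = i then z i - a i else 0)) (z i) := by
    apply HasDerivAt.fun_sum
    intro k _
    by_cases hk : k = i
    · subst hk
      simp only [eq_self_iff_true, if_true]
      simpa using ((hasDerivAt_pow 2 (z k)).div_const 2).fun_sub
        ((hasDerivAt_id (z k)).const_mul (a k))
    · simp only [if_neg hk]
      exact hasDerivAt_const _ _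
  have h2 : HasDerivAt (fun t => ∑ k, ∑ j ∈ univ.erase k,
      c k j * Real.log ((if k = i then t else z k) - (if j = i then t else z j)))
      (∑ k, (if k = i then ∑ j ∈ univ.erase i, c i j * (z i - z j)⁻¹
        else -(c k i * (z k - z i)⁻¹))) (z i) := by
    apply HasDerivAt.fun_sum
    intro k _
    by_cases hk : k = i
    · subst hk
      simp only [eq_self_iff_true, if_true]
      have hfun : (fun t => ∑ j ∈ univ.erase k,
          c k j * Real.log (t - if j = k then t else z j))
          = fun t => ∑ j ∈ univ.erase k, c k j * Real.log (t - z j) := by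
        funext t
        exact Finset.sum_congr rfl fun j hj => by rw [if_neg (Finset.ne_of_mem_erase hj)]
      rw [hfun]
      apply HasDerivAt.fun_sum
      intro j hj
      have hne : z k - z j ≠ 0 :=
        sub_ne_zero.mpr (hz k j (Ne.symm (Finset.ne_of_mem_erase hj)))
      have hlog : HasDerivAt (fun t => Real.log (t - z j)) ((z k - z j)⁻¹) (z k) := by
        simpa [Function.comp_def] using (Real.hasDerivAt_log hne).comp (z k) ((hasDerivAt_id (z k)).sub_const (z j))
      simpa [mul_comm, mul_assoc] using hlog.const_mul (c k j)
    · simp only [if_neg hk]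
      have hsum : HasDerivAt (fun t => ∑ j ∈ univ.erase k,
          c k j * Real.log (z k - if j = i then t else z j))
          (∑ j ∈ univ.erase k, (if j = i then -(c k i * (z k - z i)⁻¹) else 0)) (z i) := by
        apply HasDerivAt.fun_sum
        intro j hj
        by_cases hji : j = i
        · subst hji
          simp only [eq_self_iff_true, if_true]
          have hne : z k - z j ≠ 0 := sub_ne_zero.mpr (hz k j hk)
          have hlog : HasDerivAt (fun t => Real.log (z k - t)) ((z k - z j)⁻¹ * (-1)) (z j) :=
            (Real.hasDerivAt_log hne).comp (z j) ((hasDerivAt_id (z j)).const_sub (z k))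
          have := hlog.const_mul (c k j)
          refine this.congr_deriv ?_
          ring
        · simp only [if_neg hji]
          exact hasDerivAt_const _ _
      have hval : ∑ j ∈ univ.erase k, (if j = i then -(c k i * (z k - z i)⁻¹) else 0)
          = -(c k i * (z k - z i)⁻¹) := by
        rw [Finset.sum_ite_eq' (univ.erase k) i (fun _ => -(c k i * (z k - z i)⁻¹))]
        simp [Finset.mem_erase, Ne.symm hk]
      rw [hval] at hsum
      exact hsum
  have h := h1.fun_sub (h2.const_mul (1/2))
  refine h.congr_deriv ?_
  have e1 : ∑ k, (if k = i then z i - a i else (0:ℝ)) = z i - a i := by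
    rw [Finset.sum_ite_eq' univ i (fun _ => z i - a i)]
    simp
  have e2 : ∑ k, (if k = i then ∑ j ∈ univ.erase i, c i j * (z i - z j)⁻¹
      else -(c k i * (z k - z i)⁻¹))
      = 2 * ∑ j ∈ univ.erase i, c i j * (z i - z j)⁻¹ := by
    rw [← Finset.add_sum_erase univ _ (Finset.mem_univ i)]
    rw [if_pos rfl]
    have : ∑ k ∈ univ.erase i, (if k = i then ∑ j ∈ univ.erase i, c i j * (z i - z j)⁻¹
        else -(c k i * (z k - z i)⁻¹))
        = ∑ k ∈ univ.erase i, c i k * (z i - z k)⁻¹ := by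
      apply Finset.sum_congr rfl
      intro k hk
      have hki : k ≠ i := Finset.ne_of_mem_erase hk
      rw [if_neg hki, hsymm k i hki]
      rw [show z k - z i = -(z i - z k) by ring, inv_neg]
      ring
    rw [this]
    ring
  rw [e1, e2]
  ring

lemma exists_strictMono_sol {d : ℕ} (hd : 2 ≤ d) (a : Fin d → ℝ) (c : Fin d → Fin d → ℝ)
    (hsymm : ∀ i j, i ≠ j → c i j = c j i) (hpos : ∀ i j, i ≠ j → 0 < c i j) :
    ∃ ξ : Fin d → ℝ, StrictMono ξ ∧
      ∀ i, ξ i = a i + ∑ j ∈ univ.erase i, c i j / (ξ i - ξ j) := by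
  have hquad : ∀ t : ℝ, -((K a c)^2/2) ≤ t^2/2 - K a c * |t| := by
    intro t
    nlinarith [sq_nonneg (|t| - K a c), sq_abs t]
  set B : ℝ := (d : ℝ) * ((K a c)^2/2) with hB
  have hBnn : 0 ≤ B := by positivity
  have hsumlow : ∀ x : Fin d → ℝ, -B ≤ ∑ i, ((x i)^2/2 - K a c * |x i|) := by
    intro x
    calc -B = ∑ _i : Fin d, (-((K a c)^2/2)) := by
          rw [Finset.sum_const, Finset.card_univ, Fintype.card_fin, nsmul_eq_mul]; ring
      _ ≤ ∑ i, ((x i)^2/2 - K a c * |x i|) := Finset.sum_le_sum fun i _ => hquad (x i)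
  -- a fixed off-diagonal pair
  have h0d : 0 < d := by omega
  have h1d : 1 < d := by omega
  set k0 : Fin d := ⟨0, h0d⟩ with hk0
  set k1 : Fin d := ⟨1, h1d⟩ with hk1
  have hne01 : k0 ≠ k1 := by simp [hk0, hk1, Fin.ext_iff]
  have hFlow : ∀ x : Fin d → ℝ, -B ≤ F a c x := by
    intro x
    have h := masterBound a c hpos x k0 k1 hne01
    have hm : 0 ≤ (1/2) * (c k0 k1 * max 0 (-Real.log (x k0 - x k1))) :=
      mul_nonneg (by norm_num) (mul_nonneg (le_of_lt (hpos _ _ hne01)) (le_max_left _ _))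
    linarith [hsumlow x]
  set x₀ : Fin d → ℝ := fun i => (i : ℝ) with hx₀
  set M : ℝ := F a c x₀ with hM
  -- delta
  set cfun : Fin d × Fin d → ℝ :=
    fun p => min 1 (Real.exp (-(2*(M+B+1)) / c p.1 p.2)) with hcfun
  have hoffne : (Finset.offDiag (univ : Finset (Fin d))).Nonempty :=
    ⟨(k0, k1), by simp [Finset.mem_offDiag, hne01]⟩
  set δ : ℝ := Finset.inf' _ hoffne cfun with hδ
  have hδpos : 0 < δ := by
    rw [hδ, Finset.lt_inf'_iff]
    intro p _
    exact lt_min one_pos (Real.exp_pos _)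
  have hδ1 : δ ≤ 1 := by
    refine le_trans (Finset.inf'_le cfun (b := (k0, k1))
      (by simp [Finset.mem_offDiag, hne01])) ?_
    exact min_le_left _ _
  have hδle : ∀ k l : Fin d, k ≠ l → δ ≤ Real.exp (-(2*(M+B+1)) / c k l) := by
    intro k l h
    refine le_trans (Finset.inf'_le cfun (b := (k, l))
      (by simp [Finset.mem_offDiag, h])) ?_
    exact min_le_right _ _
  -- gap blow-up
  have hgap : ∀ (x : Fin d → ℝ) (k l : Fin d), k ≠ l →
      0 < x k - x l → x k - x l < δ → M < F a c x := by
    intro x k l hkl hgt hlt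
    have h := masterBound a c hpos x k l hkl
    have hc := hpos k l hkl
    have hlog : Real.log (x k - x l) < Real.log δ := Real.log_lt_log hgt hlt
    have hlogδ : Real.log δ ≤ -(2*(M+B+1)) / c k l := by
      have h2 := Real.log_le_log hδpos (hδle k l hkl)
      rwa [Real.log_exp] at h2
    by_cases h0 : M + B + 1 ≤ 0
    · have : -B ≤ F a c x := hFlow x
      linarith
    · push_neg at h0
      have hnd : -(2*(M+B+1)) / c k l = -(2*(M+B+1) / c k l) := neg_div _ _
      have h1 : 2*(M+B+1)/ c k l ≤ -Real.log (x k - x l) := by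
        rw [hnd] at hlogδ; linarith
      have h1' : 2*(M+B+1)/ c k l ≤ max 0 (-Real.log (x k - x l)) :=
        h1.trans (le_max_right _ _)
      have h2 : c k l * (2*(M+B+1)/ c k l) ≤ c k l * max 0 (-Real.log (x k - x l)) :=
        mul_le_mul_of_nonneg_left h1' (le_of_lt hc)
      have e : c k l * (2*(M+B+1)/ c k l) = 2*(M+B+1) := by
        field_simp
      rw [e] at h2
      linarith [hsumlow x]
  -- norm blow-up
  set R : ℝ := max (d : ℝ) (K a c + Real.sqrt (2*M + 2*B + (K a c)^2 + 1)) with hR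
  have hRd : (d : ℝ) ≤ R := le_max_left _ _
  have hRnorm : ∀ (x : Fin d → ℝ) (m : Fin d), R < |x m| → M < F a c x := by
    intro x m hm
    have hKn := K_nonneg a c hpos
    have hsum_ge : (x m)^2/2 - K a c * |x m| - B ≤ ∑ i, ((x i)^2/2 - K a c * |x i|) := by
      rw [← Finset.add_sum_erase univ _ (Finset.mem_univ m)]
      have h1 : ∑ i ∈ univ.erase m, (-((K a c)^2/2))
          ≤ ∑ i ∈ univ.erase m, ((x i)^2/2 - K a c * |x i|) :=
        Finset.sum_le_sum fun i _ => hquad (x i)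
      have h2 : -B ≤ ∑ i ∈ univ.erase m, (-((K a c)^2/2)) := by
        rw [Finset.sum_const, nsmul_eq_mul]
        have hcard : ((univ.erase m).card : ℝ) ≤ (d : ℝ) := by
          have := Finset.card_le_univ (univ.erase m)
          simp only [Fintype.card_fin] at this
          exact_mod_cast this
        have hKsq : 0 ≤ (K a c)^2/2 := by positivity
        rw [hB]
        nlinarith
      linarith
    have hmain : M + B < (x m)^2/2 - K a c * |x m| := by
      set s : ℝ := Real.sqrt (2*M + 2*B + (K a c)^2 + 1) with hs
      have hsnn : 0 ≤ s := Real.sqrt_nonneg _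
      have hts : K a c + s ≤ R := le_max_right _ _
      have htK : K a c + s < |x m| := lt_of_le_of_lt hts hm
      by_cases hcs : 0 ≤ 2*M + 2*B + (K a c)^2 + 1
      · have hs2 : s^2 = 2*M + 2*B + (K a c)^2 + 1 := Real.sq_sqrt hcs
        nlinarith [sq_abs (x m), abs_nonneg (x m)]
      · push_neg at hcs
        have := hquad (x m)
        nlinarith [sq_abs (x m)]
    have h := masterBound a c hpos x k0 k1 hne01
    have hmx : 0 ≤ (1/2) * (c k0 k1 * max 0 (-Real.log (x k0 - x k1))) :=
      mul_nonneg (by norm_num) (mul_nonneg (le_of_lt (hpos _ _ hne01)) (le_max_left _ _))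
    linarith
  -- the compact set
  set C : Set (Fin d → ℝ) :=
    {x | (∀ m, |x m| ≤ R) ∧ ∀ k l : Fin d, l < k → δ ≤ x k - x l} with hC
  have hx₀C : x₀ ∈ C := by
    constructor
    · intro m
      rw [hx₀]
      have h1 : (0:ℝ) ≤ (m : ℝ) := Nat.cast_nonneg _
      rw [abs_of_nonneg h1]
      have h2 : ((m : Fin d) : ℕ) < d := m.isLt
      have : ((m : ℕ) : ℝ) < (d : ℝ) := by exact_mod_cast h2
      linarith
    · intro k l hlk
      rw [hx₀]
      have h2 : (l : ℕ) + 1 ≤ (k : ℕ) := hlk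
      have h3 : ((l : ℕ) : ℝ) + 1 ≤ ((k : ℕ) : ℝ) := by exact_mod_cast h2
      linarith
  have hCsub : ∀ x ∈ C, StrictMono x := by
    intro x hx l k hlk
    have := hx.2 k l hlk
    linarith
  have hCclosed : IsClosed C := by
    have hCeq : C = (⋂ m, {x : Fin d → ℝ | |x m| ≤ R})
        ∩ ⋂ k, ⋂ l, {x : Fin d → ℝ | l < k → δ ≤ x k - x l} := by
      ext x
      simp only [hC, Set.mem_setOf_eq, Set.mem_inter_iff, Set.mem_iInter]
    rw [hCeq]
    apply IsClosed.inter
    · exact isClosed_iInter fun m => isClosed_le ((continuous_apply m).abs) continuous_const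
    · refine isClosed_iInter fun k => isClosed_iInter fun l => ?_
      by_cases h : l < k
      · have : {x : Fin d → ℝ | l < k → δ ≤ x k - x l} = {x | δ ≤ x k - x l} := by
          ext x; simp [h]
        rw [this]
        exact isClosed_le continuous_const ((continuous_apply k).sub (continuous_apply l))
      · have : {x : Fin d → ℝ | l < k → δ ≤ x k - x l} = Set.univ := by
          ext x; simp [h]
        rw [this]
        exact isClosed_univ
  have hCcomp : IsCompact C := by
    refine IsCompact.of_isClosed_subset
      (isCompact_univ_pi fun _ : Fin d => isCompact_Icc (a := -R) (b := R)) hCclosed ?_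
    intro x hx
    rw [Set.mem_univ_pi]
    intro m
    exact Set.mem_Icc.mpr (abs_le.mp (hx.1 m))
  have hCne : ∀ x ∈ C, ∀ i j : Fin d, j ≠ i → x i - x j ≠ 0 := by
    intro x hx i j hij
    rcases lt_or_gt_of_ne hij with h | h
    · have := hx.2 i j h
      intro hcon; rw [hcon] at this; linarith [hδpos]
    · have := hx.2 j i h
      intro hcon
      have : δ ≤ -(x i - x j) := by linarith
      rw [hcon] at this; linarith [hδpos]
  have hCont : ContinuousOn (F a c) C := by
    unfold F
    apply ContinuousOn.sub
    · apply Continuous.continuousOn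
      apply continuous_finset_sum
      intro i _
      exact (((continuous_apply i).pow 2).div_const 2).sub
        (continuous_const.mul (continuous_apply i))
    · apply ContinuousOn.mul continuousOn_const
      apply continuousOn_finset_sum
      intro i _
      apply continuousOn_finset_sum
      intro j hj
      apply ContinuousOn.mul continuousOn_const
      apply ContinuousOn.log
      · exact ((continuous_apply i).sub (continuous_apply j)).continuousOn
      · intro x hx
        exact hCne x hx i j (Finset.ne_of_mem_erase hj)
  obtain ⟨z, hzC, hzmin⟩ := hCcomp.exists_isMinOn ⟨x₀, hx₀C⟩ hCont
  have hzM : F a c z ≤ M := isMinOn_iff.mp hzmin x₀ hx₀C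
  have hglob : ∀ y : Fin d → ℝ, StrictMono y → F a c z ≤ F a c y := by
    intro y hy
    by_cases hyC : y ∈ C
    · exact isMinOn_iff.mp hzmin y hyC
    · have hyC' : ¬((∀ m, |y m| ≤ R) ∧ ∀ k l : Fin d, l < k → δ ≤ y k - y l) := hyC
      have hMlt : M < F a c y := by
        rcases not_and_or.mp hyC' with h | h
        · push_neg at h
          obtain ⟨m, hm⟩ := h
          exact hRnorm y m hm
        · push_neg at h
          obtain ⟨k, l, hlk, hlt⟩ := h
          have hgt : 0 < y k - y l := sub_pos.mpr (hy hlk)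
          exact hgap y k l (ne_of_gt hlk) hgt hlt
      linarith
  have hzsm : StrictMono z := hCsub z hzC
  have hzne : ∀ i j : Fin d, i ≠ j → z i ≠ z j := fun i j hij => hzsm.injective.ne hij
  have hΩ : IsOpen {x : Fin d → ℝ | StrictMono x} := by
    have : {x : Fin d → ℝ | StrictMono x}
        = ⋂ k, ⋂ l, {x : Fin d → ℝ | l < k → x l < x k} := by
      ext x
      simp only [Set.mem_setOf_eq, Set.mem_iInter]
      constructor
      · intro h k l hlk; exact h hlk
      · intro h l k hlk; exact h k l hlk
    rw [this]
    refine isOpen_iInter_of_finite fun k => isOpen_iInter_of_finite fun l => ?_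
    by_cases h : l < k
    · have : {x : Fin d → ℝ | l < k → x l < x k} = {x | x l < x k} := by ext x; simp [h]
      rw [this]
      exact isOpen_lt (continuous_apply l) (continuous_apply k)
    · have : {x : Fin d → ℝ | l < k → x l < x k} = Set.univ := by ext x; simp [h]
      rw [this]
      exact isOpen_univ
  refine ⟨z, hzsm, fun i => ?_⟩
  have hupd : Continuous (fun t : ℝ => Function.update z i t) := by
    apply continuous_pi
    intro j
    by_cases hj : j = i
    · subst hj
      simp only [Function.update_apply, eq_self_iff_true, if_true]
      exact continuous_id
    · simp only [Function.update_apply, if_neg hj]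
      exact continuous_const
  have hloc : IsLocalMin (fun t => F a c (Function.update z i t)) (z i) := by
    have hmem : z ∈ {x : Fin d → ℝ | StrictMono x} := hzsm
    have hnh : (fun t : ℝ => Function.update z i t) ⁻¹' {x | StrictMono x} ∈ nhds (z i) := by
      apply hupd.continuousAt.preimage_mem_nhds
      apply hΩ.mem_nhds
      simpa [Function.update_eq_self] using hmem
    filter_upwards [hnh] with t ht
    have h := hglob _ ht
    simpa [Function.update_eq_self] using h
  have hder := hasDerivAt_F a c hsymm z hzne i
  have h0 : z i - a i - ∑ j ∈ univ.erase i, c i j * (z i - z j)⁻¹ = 0 := by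
    rw [← hder.deriv]
    exact hloc.deriv_eq_zero
  have hdiv : ∑ j ∈ univ.erase i, c i j / (z i - z j)
      = ∑ j ∈ univ.erase i, c i j * (z i - z j)⁻¹ :=
    Finset.sum_congr rfl fun j _ => div_eq_mul_inv _ _
  rw [hdiv]
  linarith [h0]

end CMsol

open Finset

/-- For symmetric positive `c`, the set of solutions with pairwise
distinct coordinates of the system `ξ i = a i + ∑_{j ≠ i} c i j / (ξ i - ξ j)` has
exactly `d!` elements. -/
theorem card_solutions_eq_factorial
    (d : ℕ) (hd : 2 ≤ d) (a : Fin d → ℝ) (c : Fin d → Fin d → ℝ)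
    (hsymm : ∀ i j : Fin d, i ≠ j → c i j = c j i)
    (hpos : ∀ i j : Fin d, i ≠ j → 0 < c i j) :
    ({ξ : Fin d → ℝ | (∀ i j : Fin d, i ≠ j → ξ i ≠ ξ j) ∧
        ∀ i : Fin d, ξ i = a i + ∑ j ∈ Finset.univ.erase i, c i j / (ξ i - ξ j)}).Finite ∧
      ({ξ : Fin d → ℝ | (∀ i j : Fin d, i ≠ j → ξ i ≠ ξ j) ∧
        ∀ i : Fin d, ξ i = a i + ∑ j ∈ Finset.univ.erase i, c i j / (ξ i - ξ j)}).ncard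
        = Nat.factorial d := by
  set S : Set (Fin d → ℝ) := {ξ : Fin d → ℝ | (∀ i j : Fin d, i ≠ j → ξ i ≠ ξ j) ∧
      ∀ i : Fin d, ξ i = a i + ∑ j ∈ Finset.univ.erase i, c i j / (ξ i - ξ j)} with hSdef
  have hex : ∀ σ : Equiv.Perm (Fin d), ∃ ζ : Fin d → ℝ, StrictMono ζ ∧
      ∀ i, ζ i = a (σ i) + ∑ j ∈ univ.erase i, c (σ i) (σ j) / (ζ i - ζ j) := by
    intro σ
    exact CMsol.exists_strictMono_sol hd (fun i => a (σ i)) (fun i j => c (σ i) (σ j))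
      (fun i j hij => hsymm _ _ (fun h => hij (σ.injective h)))
      (fun i j hij => hpos _ _ (fun h => hij (σ.injective h)))
  choose ζ hζmono hζeq using hex
  set g : Equiv.Perm (Fin d) → (Fin d → ℝ) := fun σ => (ζ σ) ∘ σ.symm with hg
  have hcomp : ∀ σ : Equiv.Perm (Fin d), (g σ) ∘ σ = ζ σ := by
    intro σ
    funext i
    simp [hg, Function.comp, Equiv.symm_apply_apply]
  have hgS : ∀ σ, g σ ∈ S := by
    intro σ
    constructor
    · intro i j hij
      have hne : σ.symm i ≠ σ.symm j := fun h => hij (by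
        have := congrArg σ h
        simpa using this)
      exact (hζmono σ).injective.ne hne
    · apply (CMsol.relabel a c (g σ) σ).mpr
      intro i
      have h := hζeq σ i
      have e : (g σ) ∘ σ = ζ σ := hcomp σ
      calc ((g σ) ∘ σ) i = ζ σ i := by rw [e]
        _ = a (σ i) + ∑ j ∈ univ.erase i, c (σ i) (σ j) / (ζ σ i - ζ σ j) := h
        _ = a (σ i) + ∑ j ∈ univ.erase i, c (σ i) (σ j) / (((g σ) ∘ σ) i - ((g σ) ∘ σ) j) := by
            rw [e]
  have hginjf : ∀ σ : Equiv.Perm (Fin d), Function.Injective (g σ) := by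
    intro σ i j hij
    have h1 : σ.symm i = σ.symm j := (hζmono σ).injective hij
    have := congrArg σ h1
    simpa using this
  have hginj : Function.Injective g := by
    intro σ τ h
    apply CMsol.sort_unique (g σ) (hginjf σ) σ τ
    · rw [hcomp σ]; exact hζmono σ
    · rw [show (g σ) ∘ ⇑τ = (g τ) ∘ ⇑τ by rw [h], hcomp τ]; exact hζmono τ
  have hgsurj : ∀ ξ ∈ S, ∃ σ, g σ = ξ := by
    intro ξ hξ
    obtain ⟨hne, heq⟩ := hξ
    have hinj : Function.Injective ξ := by
      intro i j h
      by_contra hij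
      exact hne i j hij h
    obtain ⟨σ, hσ⟩ : ∃ σ : Equiv.Perm (Fin d), StrictMono (ξ ∘ σ) :=
      ⟨Tuple.sort ξ, (Tuple.monotone_sort ξ).strictMono_of_injective
        (hinj.comp (Equiv.injective _))⟩
    refine ⟨σ, ?_⟩
    have h1 := (CMsol.relabel a c ξ σ).mp heq
    have huniq := CMsol.uniq (fun i => a (σ i)) (fun i j => c (σ i) (σ j))
      (fun i j hij => hsymm _ _ (fun h => hij (σ.injective h)))
      (fun i j hij => hpos _ _ (fun h => hij (σ.injective h)))
      (ζ σ) (ξ ∘ σ) (hζmono σ) hσ (hζeq σ) h1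
    funext i
    have : ζ σ (σ.symm i) = (ξ ∘ σ) (σ.symm i) := by rw [huniq]
    simpa [hg, Function.comp] using this
  have hSrange : S = Set.range g := by
    ext ξ
    constructor
    · intro h
      obtain ⟨σ, hσ⟩ := hgsurj ξ h
      exact ⟨σ, hσ⟩
    · rintro ⟨σ, rfl⟩
      exact hgS σ
  constructor
  · rw [hSrange]; exact Set.finite_range g
  · rw [hSrange, ← Set.image_univ, Set.ncard_image_of_injective _ hginj, Set.ncard_univ,
      Nat.card_eq_fintype_card, Fintype.card_perm, Fintype.card_fin]
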